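/- Let n ≥ 1, m = 2n, and let y : [0,1] → ℂ be 2n times continuously differentiable. Then 2·Im(∫₀¹ (−i)^{2n} y^{(2n)}(x)·conj(y(x)) dx) = q_J(ŷ₁) − q_J(ŷ₀). -/

import Mathlib

/-- The quadratic form `q_J(u) = i·(−1)^{n+1} · Σ_{p=0}^{2n−1} (−1)^{p+1} u_p·conj(u_{2n−1−p})`
of the matrix `J` (here `Fin.rev p` has value `2n−1−p`). -/
noncomputable def qJ (n : ℕ) (u : Fin (2 * n) → ℂ) : ℂ :=
  Complex.I * (-1 : ℂ) ^ (n + 1) *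
    ∑ p : Fin (2 * n), (-1 : ℂ) ^ ((p : ℕ) + 1) * u p * (starRingEnd ℂ) (u p.rev)

/-- for `m = 2n` and `y` 2n-times continuously differentiable,
`2·Im(∫₀¹ (−i)^{2n} y^{(2n)}·conj(y)) = q_J(ŷ₁) − q_J(ŷ₀)`. -/
theorem stmt1 (n : ℕ) (hn : 1 ≤ n) (y : ℝ → ℂ) (hy : ContDiff ℝ (2 * n) y) :
    (2 * (∫ x in (0:ℝ)..1,
        (-Complex.I) ^ (2 * n) * iteratedDeriv (2 * n) y x * (starRingEnd ℂ) (y x)).im : ℂ)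
      = qJ n (fun k => iteratedDeriv (k : ℕ) y 1)
        - qJ n (fun k => iteratedDeriv (k : ℕ) y 0) := by
  -- basic facts about iterated derivatives
  have hdq : ∀ k : ℕ, k < 2 * n → ∀ x : ℝ,
      HasDerivAt (iteratedDeriv k y) (iteratedDeriv (k + 1) y x) x := by
    intro k hk x
    have h1 : Differentiable ℝ (iteratedDeriv k y) :=
      hy.differentiable_iteratedDeriv k (by exact_mod_cast hk)
    simpa [iteratedDeriv_succ] using (h1 x).hasDerivAt
  have hcontD : ∀ k : ℕ, k ≤ 2 * n → Continuous (iteratedDeriv k y) := by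
    intro k hk
    exact hy.continuous_iteratedDeriv k (by exact_mod_cast hk)
  -- the "boundary" function F
  set F : ℝ → ℂ := fun t => ∑ p : Fin (2 * n),
      (-1 : ℂ) ^ ((p : ℕ) + 1) * iteratedDeriv (p : ℕ) y t *
        (starRingEnd ℂ) (iteratedDeriv (p.rev : ℕ) y t) with hFdef
  have key : ∀ x : ℝ, HasDerivAt F
      (iteratedDeriv (2 * n) y x * (starRingEnd ℂ) (y x)
        - y x * (starRingEnd ℂ) (iteratedDeriv (2 * n) y x)) x := by
    intro x
    set g : ℕ → ℂ := fun k =>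
      (-1 : ℂ) ^ k * iteratedDeriv k y x *
        (starRingEnd ℂ) (iteratedDeriv (2 * n - k) y x) with hg
    have hterm : ∀ p : Fin (2 * n), HasDerivAt
        (fun t => (-1 : ℂ) ^ ((p : ℕ) + 1) * iteratedDeriv (p : ℕ) y t *
          (starRingEnd ℂ) (iteratedDeriv (p.rev : ℕ) y t))
        (g ((p : ℕ) + 1) - g (p : ℕ)) x := by
      intro p
      have hp : (p : ℕ) < 2 * n := p.isLt
      have hrevp : ((p.rev : Fin (2 * n)) : ℕ) = 2 * n - ((p : ℕ) + 1) := Fin.val_rev p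
      have h1 : HasDerivAt (fun t => (-1 : ℂ) ^ ((p : ℕ) + 1) * iteratedDeriv (p : ℕ) y t)
          ((-1 : ℂ) ^ ((p : ℕ) + 1) * iteratedDeriv ((p : ℕ) + 1) y x) x :=
        (hdq (p : ℕ) hp x).const_mul _
      have h2 : HasDerivAt (fun t => (starRingEnd ℂ) (iteratedDeriv (p.rev : ℕ) y t))
          ((starRingEnd ℂ) (iteratedDeriv ((p.rev : ℕ) + 1) y x)) x := by
        exact (hdq (p.rev : ℕ) p.rev.isLt x).star
      have h3 := h1.mul h2
      have e2 : (p.rev : ℕ) + 1 = 2 * n - (p : ℕ) := by omega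
      have e3 : 2 * n - ((p : ℕ) + 1) = (p.rev : ℕ) := by omega
      have hsum : (-1 : ℂ) ^ ((p : ℕ) + 1) * iteratedDeriv ((p : ℕ) + 1) y x *
            (starRingEnd ℂ) (iteratedDeriv (p.rev : ℕ) y x)
          + (-1 : ℂ) ^ ((p : ℕ) + 1) * iteratedDeriv (p : ℕ) y x *
            (starRingEnd ℂ) (iteratedDeriv ((p.rev : ℕ) + 1) y x)
          = g ((p : ℕ) + 1) - g (p : ℕ) := by
        simp only [hg, e2, e3, pow_succ]
        ring
      exact hsum ▸ h3
    have hs := HasDerivAt.fun_sum (fun p (_ : p ∈ Finset.univ) => hterm p)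
    have hsum2 : (∑ p : Fin (2 * n), (g ((p : ℕ) + 1) - g (p : ℕ)))
        = iteratedDeriv (2 * n) y x * (starRingEnd ℂ) (y x)
          - y x * (starRingEnd ℂ) (iteratedDeriv (2 * n) y x) := by
      rw [Fin.sum_univ_eq_sum_range (fun k => g (k + 1) - g k), Finset.sum_range_sub]
      have h2n : (-1 : ℂ) ^ (2 * n) = 1 := by
        rw [pow_mul]; norm_num
      simp [hg, h2n, iteratedDeriv_zero]
    rw [hsum2] at hs
    exact hs
  -- rewrite qJ in terms of F
  have hqJ : ∀ t : ℝ, qJ n (fun k => iteratedDeriv (k : ℕ) y t)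
      = Complex.I * (-1 : ℂ) ^ (n + 1) * F t := fun t => by
    simp only [qJ, hFdef]
  -- the function H = I * (-1)^(n+1) * F and its derivative
  set H' : ℝ → ℂ := fun x => Complex.I * (-1 : ℂ) ^ (n + 1) *
      (iteratedDeriv (2 * n) y x * (starRingEnd ℂ) (y x)
        - y x * (starRingEnd ℂ) (iteratedDeriv (2 * n) y x)) with hH'
  have keyH : ∀ x : ℝ, HasDerivAt (fun t => Complex.I * (-1 : ℂ) ^ (n + 1) * F t) (H' x) x :=
    fun x => (key x).const_mul _
  have hc1 : Continuous (iteratedDeriv (2 * n) y) := hcontD (2 * n) le_rfl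
  have hc0 : Continuous y := hy.continuous
  have hcy : Continuous fun x => (starRingEnd ℂ) (y x) :=
    Complex.continuous_conj.comp hc0
  have hcD : Continuous fun x => (starRingEnd ℂ) (iteratedDeriv (2 * n) y x) :=
    Complex.continuous_conj.comp hc1
  have hH'cont : Continuous H' := by
    rw [hH']
    exact continuous_const.mul ((hc1.mul hcy).sub (hc0.mul hcD))
  have hftc : (∫ x in (0:ℝ)..1, H' x)
      = Complex.I * (-1 : ℂ) ^ (n + 1) * F 1 - Complex.I * (-1 : ℂ) ^ (n + 1) * F 0 :=
    intervalIntegral.integral_eq_sub_of_hasDerivAt (fun x _ => keyH x)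
      (hH'cont.intervalIntegrable 0 1)
  -- the integrand and its properties
  set f : ℝ → ℂ := fun x =>
      (-Complex.I) ^ (2 * n) * iteratedDeriv (2 * n) y x * (starRingEnd ℂ) (y x) with hf
  have hfcont : Continuous f := by
    rw [hf]
    exact (continuous_const.mul hc1).mul hcy
  have hI2n : (-Complex.I) ^ (2 * n) = (-1 : ℂ) ^ n := by
    have h2 : (-Complex.I) ^ 2 = -1 := by
      rw [neg_pow]
      simp [Complex.I_sq]
    rw [pow_mul, h2]
  -- pointwise: (2 * (f x).im : ℂ) = H' x
  have hpt : ∀ x : ℝ, ((2 * (f x).im : ℝ) : ℂ) = H' x := by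
    intro x
    have hsc := Complex.sub_conj (f x)
    push_cast at hsc
    have hconj : (starRingEnd ℂ) (f x)
        = (-1 : ℂ) ^ n * (starRingEnd ℂ) (iteratedDeriv (2 * n) y x) * y x := by
      simp only [hf, hI2n, map_mul, map_pow, map_neg, map_one, Complex.conj_conj]
    have hfx : f x = (-1 : ℂ) ^ n * iteratedDeriv (2 * n) y x * (starRingEnd ℂ) (y x) := by
      rw [hf]; simp only [hI2n]
    have hI2 : Complex.I * Complex.I = -1 := Complex.I_mul_I
    simp only [hH', pow_succ]
    push_cast
    linear_combination Complex.I * hsc - Complex.I * hfx + Complex.I * hconj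
      + (2 * ((f x).im : ℂ)) * hI2
  -- put it together
  have him_int : (∫ x in (0:ℝ)..1, f x).im = ∫ x in (0:ℝ)..1, (f x).im := by
    have hint : IntervalIntegrable f MeasureTheory.volume 0 1 := hfcont.intervalIntegrable 0 1
    have := Complex.imCLM.intervalIntegral_comp_comm hint
    simpa using this.symm
  calc (2 * (∫ x in (0:ℝ)..1, f x).im : ℂ)
      = ((∫ x in (0:ℝ)..1, 2 * (f x).im : ℝ) : ℂ) := by
        rw [him_int, intervalIntegral.integral_const_mul]
        push_cast
        ring
    _ = ∫ x in (0:ℝ)..1, ((2 * (f x).im : ℝ) : ℂ) := by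
        rw [intervalIntegral.integral_ofReal]
    _ = ∫ x in (0:ℝ)..1, H' x := by
        refine intervalIntegral.integral_congr fun x _ => hpt x
    _ = qJ n (fun k => iteratedDeriv (k : ℕ) y 1)
        - qJ n (fun k => iteratedDeriv (k : ℕ) y 0) := by
        rw [hftc, hqJ 1, hqJ 0]
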